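/- Let N, Ñ ∈ L²-type weighted space on (0,π), i.e., (π-x)N(x) and (π-x)Ñ(x) are in L²(0,π) with ‖(π-·)N‖_{L²} ≤ r and ‖(π-·)Ñ‖_{L²} ≤ r. Define M(x) = 2N(x) - ∫_0^x (N*N)(t) dt and M̃(x) = 2Ñ(x) - ∫_0^x (Ñ*Ñ)(t) dt, where (f*g)(x) = ∫_0^x f(x-t)g(t) dt. Then ‖(π-·)(M - M̃)‖_{L²(0,π)} ≤ (2 + 2r√π)·‖(π-·)(N - Ñ)‖_{L²(0,π)}. -/

import Mathlib

open Real MeasureTheory intervalIntegral Set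

lemma lint_sub_left (f : ℝ → ENNReal) (hf : Measurable f) (a : ℝ) : ∫⁻ x, f (a - x) = ∫⁻ x, f x := by
  have h : Measurable (fun x : ℝ => a - x) := measurable_const.sub measurable_id
  have := lintegral_map (μ := volume) hf h
  rw [Measure.map_sub_left_eq_self volume a] at this
  exact this.symm

lemma lint_sub_right (f : ℝ → ENNReal) (hf : Measurable f) (a : ℝ) : ∫⁻ x, f (x - a) = ∫⁻ x, f x := by
  have h : Measurable (fun x : ℝ => x - a) := measurable_id.sub measurable_const
  have := lintegral_map (μ := volume) hf h
  rw [show (fun x : ℝ => x - a) = (fun x : ℝ => x + (-a)) by ext x; ring,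
    map_add_right_eq_self volume (-a)] at this
  simp only [sub_eq_add_neg]
  exact this.symm

lemma conj22 : Real.HolderConjugate 2 2 := ⟨by norm_num, by norm_num, by norm_num⟩

lemma sq_half (a : ENNReal) : (a ^ (2:ℝ)) ^ ((2:ℝ)⁻¹) = a := by
  rw [← ENNReal.rpow_mul]; norm_num

lemma half_sq (a : ENNReal) : (a ^ ((2:ℝ)⁻¹)) ^ (2:ℝ) = a := by
  rw [← ENNReal.rpow_mul]; norm_num

lemma young (k g : ℝ → ENNReal) (hk : Measurable k) (hg : Measurable g) :
    ∫⁻ x, (∫⁻ s, k (x - s) * g s) ^ (2:ℝ) ≤ (∫⁻ y, k y) ^ (2:ℝ) * ∫⁻ s, (g s) ^ (2:ℝ) := by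
  set Ik := ∫⁻ y, k y with hIk
  have hks : ∀ x : ℝ, Measurable (fun s => k (x - s)) := fun x => hk.comp (measurable_const.sub measurable_id)
  have step1 : ∀ x : ℝ, (∫⁻ s, k (x - s) * g s) ^ (2:ℝ) ≤ Ik * ∫⁻ s, k (x - s) * (g s) ^ (2:ℝ) := by
    intro x
    have hsplit : ∀ s : ℝ, k (x - s) * g s = (k (x-s) ^ ((2:ℝ)⁻¹)) * ((k (x-s) ^ ((2:ℝ)⁻¹)) * g s) := by
      intro s
      rw [← mul_assoc, ← ENNReal.rpow_add_of_nonneg _ _ (by norm_num) (by norm_num)]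
      norm_num
    have hH := ENNReal.lintegral_mul_le_Lp_mul_Lq (volume : Measure ℝ) conj22
      (f := fun s => k (x-s) ^ ((2:ℝ)⁻¹)) (g := fun s => (k (x-s) ^ ((2:ℝ)⁻¹)) * g s)
      (((hks x).pow_const _).aemeasurable) ((((hks x).pow_const _).mul hg).aemeasurable)
    simp only [Pi.mul_apply] at hH
    have e1 : ∀ s:ℝ, (k (x-s) ^ ((2:ℝ)⁻¹)) ^ (2:ℝ) = k (x-s) := fun s => half_sq _
    have e2 : ∀ s:ℝ, ((k (x-s) ^ ((2:ℝ)⁻¹)) * g s) ^ (2:ℝ) = k (x-s) * (g s)^(2:ℝ) := by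
      intro s
      rw [ENNReal.mul_rpow_of_nonneg _ _ (by norm_num), half_sq]
    calc (∫⁻ s, k (x - s) * g s) ^ (2:ℝ)
        = (∫⁻ s, (k (x-s) ^ ((2:ℝ)⁻¹)) * ((k (x-s) ^ ((2:ℝ)⁻¹)) * g s)) ^ (2:ℝ) := by
          simp_rw [hsplit]
      _ ≤ ((∫⁻ s, (k (x-s) ^ ((2:ℝ)⁻¹))^(2:ℝ)) ^ ((1:ℝ)/2) * (∫⁻ s, ((k (x-s) ^ ((2:ℝ)⁻¹)) * g s)^(2:ℝ)) ^ ((1:ℝ)/2)) ^ (2:ℝ) := by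
          exact ENNReal.rpow_le_rpow hH (by norm_num)
      _ = (∫⁻ s, k (x-s)) * (∫⁻ s, k (x-s) * (g s)^(2:ℝ)) := by
          simp_rw [e1, e2]
          rw [ENNReal.mul_rpow_of_nonneg _ _ (by norm_num)]
          rw [show (1:ℝ)/2 = (2:ℝ)⁻¹ by norm_num, half_sq, half_sq]
      _ = Ik * ∫⁻ s, k (x - s) * (g s) ^ (2:ℝ) := by
          rw [lint_sub_left k hk x]
  calc ∫⁻ x, (∫⁻ s, k (x - s) * g s) ^ (2:ℝ)
      ≤ ∫⁻ x, Ik * ∫⁻ s, k (x - s) * (g s) ^ (2:ℝ) := lintegral_mono step1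
    _ = Ik * ∫⁻ x, ∫⁻ s, k (x - s) * (g s) ^ (2:ℝ) := by
        rw [lintegral_const_mul Ik]
        exact Measurable.lintegral_prod_right
          (((hk.comp (measurable_fst.sub measurable_snd))).mul ((hg.comp measurable_snd).pow_const _))
    _ = Ik * ∫⁻ s, ∫⁻ x, k (x - s) * (g s) ^ (2:ℝ) := by
        rw [lintegral_lintegral_swap]
        exact (((hk.comp (measurable_fst.sub measurable_snd))).mul ((hg.comp measurable_snd).pow_const _)).aemeasurable
    _ = Ik * ∫⁻ s, (g s) ^ (2:ℝ) * ∫⁻ x, k (x - s) := by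
        congr 1; refine lintegral_congr fun s => ?_
        have hm : Measurable fun x : ℝ => k (x - s) := hk.comp (measurable_id.sub measurable_const)
        simp_rw [mul_comm (k (_ - s)) ((g s)^(2:ℝ))]
        rw [lintegral_const_mul _ hm]
    _ = Ik ^ (2:ℝ) * ∫⁻ s, (g s) ^ (2:ℝ) := by
        simp_rw [fun s => lint_sub_right k hk s]
        rw [lintegral_mul_const _ (hg.pow_const _), ← hIk]
        rw [show (Ik : ENNReal) ^ (2:ℝ) = Ik * Ik by
          rw [show (2:ℝ) = ((2:ℕ):ℝ) by norm_num, ENNReal.rpow_natCast]; ring]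
        ring

lemma meas_inner {F : ℝ → ℝ → ENNReal} (hF : Measurable (Function.uncurry F)) :
    Measurable fun t => ∫⁻ s in Ioc 0 t, F t s := by
  have : ∀ t, ∫⁻ s in Ioc 0 t, F t s = ∫⁻ s, (Ioc (0:ℝ) t).indicator (F t) s := by
    intro t; rw [lintegral_indicator measurableSet_Ioc]
  simp_rw [this]
  apply Measurable.lintegral_prod_right
  have hset : MeasurableSet {p : ℝ × ℝ | 0 < p.2 ∧ p.2 ≤ p.1} := by
    apply MeasurableSet.inter
    · exact measurableSet_lt measurable_const measurable_snd
    · exact measurableSet_le measurable_snd measurable_fst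
  have : (Function.uncurry fun t s => (Ioc (0:ℝ) t).indicator (F t) s)
      = fun p : ℝ × ℝ => if p ∈ {p : ℝ × ℝ | 0 < p.2 ∧ p.2 ≤ p.1} then Function.uncurry F p else 0 := by
    funext p
    simp [Function.uncurry, Set.indicator_apply, Set.mem_Ioc]
  rw [this]
  exact Measurable.ite hset hF measurable_const

lemma double_lt_top {f g : ℝ → ENNReal} (hf : Measurable f) (hg : Measurable g) :
    ∫⁻ t in Ioc 0 π, ∫⁻ s in Ioc 0 t, f (t - s) * g s ≤ (∫⁻ u, f u) * ∫⁻ u, g u := by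
  have hsub : Measurable fun p : ℝ × ℝ => f (p.1 - p.2) * g p.2 :=
    (hf.comp (measurable_fst.sub measurable_snd)).mul (hg.comp measurable_snd)
  calc ∫⁻ t in Ioc 0 π, ∫⁻ s in Ioc 0 t, f (t - s) * g s
      ≤ ∫⁻ t in Ioc 0 π, ∫⁻ s, f (t - s) * g s := by
        apply lintegral_mono fun t => setLIntegral_le_lintegral _ _
    _ ≤ ∫⁻ t, ∫⁻ s, f (t - s) * g s := setLIntegral_le_lintegral _ _
    _ = ∫⁻ s, ∫⁻ t, f (t - s) * g s := by
        rw [lintegral_lintegral_swap hsub.aemeasurable]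
    _ = ∫⁻ s, g s * ∫⁻ t, f (t - s) := by
        refine lintegral_congr fun s => ?_
        have hm : Measurable fun t : ℝ => f (t - s) := hf.comp (measurable_id.sub measurable_const)
        simp_rw [mul_comm (f (_ - s)) (g _)]
        rw [lintegral_const_mul _ hm]
    _ = (∫⁻ u, f u) * ∫⁻ u, g u := by
        have : ∀ s : ℝ, ∫⁻ t, f (t - s) = ∫⁻ u, f u := by
          intro s
          have h : Measurable (fun x : ℝ => x - s) := measurable_id.sub measurable_const
          have := lintegral_map (μ := volume) hf h
          rw [show (fun x : ℝ => x - s) = (fun x : ℝ => x + (-s)) by ext x; ring,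
            map_add_right_eq_self volume (-s)] at this
          exact this.symm
        simp_rw [this]
        rw [lintegral_mul_const _ hg]
        ring

noncomputable def kk (f : ℝ → ℂ) : ℝ → ENNReal :=
  (Icc 0 π).indicator (fun y => ∫⁻ u in Ioc 0 y, (‖f u‖₊ : ENNReal))

noncomputable def gg (f : ℝ → ℂ) : ℝ → ENNReal :=
  (Ioo 0 π).indicator (fun s => ENNReal.ofReal (π - s) * ‖f s‖₊)

lemma kk_meas (f : ℝ → ℂ) : Measurable (kk f) := by
  apply Measurable.indicator _ measurableSet_Icc
  apply Monotone.measurable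
  intro a b hab
  exact lintegral_mono_set (Ioc_subset_Ioc le_rfl hab)

lemma gg_meas {f : ℝ → ℂ} (hf : Measurable f) : Measurable (gg f) := by
  apply Measurable.indicator _ measurableSet_Ioo
  exact (ENNReal.measurable_ofReal.comp (measurable_const.sub measurable_id)).mul hf.nnnorm.coe_nnreal_ennreal

lemma geom {f g : ℝ → ℂ} (hf : Measurable f) (hg : Measurable g) {x : ℝ} (hx : x ∈ Ioo 0 π) :
    ENNReal.ofReal (π - x) * ∫⁻ t in Ioc 0 x, ∫⁻ s in Ioc 0 t, (‖f (t - s)‖₊ : ENNReal) * ‖g s‖₊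
      ≤ ∫⁻ s, kk f (x - s) * gg g s := by
  obtain ⟨hx0, hxpi⟩ := hx
  set e : ℝ → ℝ → ENNReal := fun t s =>
    if 0 < s ∧ s ≤ t ∧ t ≤ x then (‖f (t - s)‖₊ : ENNReal) * (ENNReal.ofReal (π - s) * ‖g s‖₊) else 0
    with he
  have hemeas : Measurable (Function.uncurry e) := by
    have hset : MeasurableSet {p : ℝ × ℝ | 0 < p.2 ∧ p.2 ≤ p.1 ∧ p.1 ≤ x} := by
      refine MeasurableSet.inter (measurableSet_lt measurable_const measurable_snd) ?_
      exact MeasurableSet.inter (measurableSet_le measurable_snd measurable_fst)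
        (measurableSet_le measurable_fst measurable_const)
    have : Function.uncurry e = fun p : ℝ × ℝ =>
        if p ∈ {p : ℝ × ℝ | 0 < p.2 ∧ p.2 ≤ p.1 ∧ p.1 ≤ x} then
          (‖f (p.1 - p.2)‖₊ : ENNReal) * (ENNReal.ofReal (π - p.2) * ‖g p.2‖₊) else 0 := by
      funext p; rfl
    rw [this]
    exact Measurable.ite hset
      (((hf.comp (measurable_fst.sub measurable_snd)).nnnorm.coe_nnreal_ennreal).mul
        (((ENNReal.measurable_ofReal.comp (measurable_const.sub measurable_snd))).mul
          (hg.comp measurable_snd).nnnorm.coe_nnreal_ennreal)) measurable_const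
  have stepA : ENNReal.ofReal (π - x) * ∫⁻ t in Ioc 0 x, ∫⁻ s in Ioc 0 t, (‖f (t - s)‖₊ : ENNReal) * ‖g s‖₊
      ≤ ∫⁻ t, ∫⁻ s, e t s := by
    rw [← lintegral_const_mul' _ _ ENNReal.ofReal_ne_top]
    calc ∫⁻ t in Ioc 0 x, ENNReal.ofReal (π - x) * ∫⁻ s in Ioc 0 t, (‖f (t - s)‖₊ : ENNReal) * ‖g s‖₊
        ≤ ∫⁻ t in Ioc 0 x, ∫⁻ s in Ioc 0 t, e t s := by
          refine setLIntegral_mono' measurableSet_Ioc fun t ht => ?_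
          rw [← lintegral_const_mul' _ _ ENNReal.ofReal_ne_top]
          refine setLIntegral_mono' measurableSet_Ioc fun s hs => ?_
          have hcond : 0 < s ∧ s ≤ t ∧ t ≤ x := ⟨hs.1, hs.2, ht.2⟩
          rw [he]; simp only [hcond, if_true]
          calc ENNReal.ofReal (π - x) * ((‖f (t - s)‖₊ : ENNReal) * ‖g s‖₊)
              = (‖f (t - s)‖₊ : ENNReal) * (ENNReal.ofReal (π - x) * ‖g s‖₊) := by ring
            _ ≤ (‖f (t - s)‖₊ : ENNReal) * (ENNReal.ofReal (π - s) * ‖g s‖₊) := by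
                refine mul_le_mul_right (mul_le_mul_left (ENNReal.ofReal_le_ofReal ?_) _) _
                linarith [hs.2, ht.2]
      _ ≤ ∫⁻ t in Ioc 0 x, ∫⁻ s, e t s :=
          setLIntegral_mono' measurableSet_Ioc fun t _ => setLIntegral_le_lintegral _ _
      _ ≤ ∫⁻ t, ∫⁻ s, e t s := setLIntegral_le_lintegral _ _
  have stepB : ∫⁻ t, ∫⁻ s, e t s = ∫⁻ s, ∫⁻ t, e t s := lintegral_lintegral_swap hemeas.aemeasurable
  have stepC : ∀ s, ∫⁻ t, e t s ≤ kk f (x - s) * gg g s := by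
    intro s
    by_cases hs : 0 < s ∧ s ≤ x
    · have hrw : ∀ t, e t s
          = (Icc 0 (x - s)).indicator (fun u => (‖f u‖₊ : ENNReal)) (t - s)
            * (ENNReal.ofReal (π - s) * ‖g s‖₊) := by
        intro t
        rw [he]
        by_cases ht : s ≤ t ∧ t ≤ x
        · have : (0:ℝ) ≤ t - s ∧ t - s ≤ x - s := ⟨by linarith [ht.1], by linarith [ht.2]⟩
          simp only [hs.1, ht.1, ht.2, and_true, true_and, if_true,
            Set.indicator_of_mem (Set.mem_Icc.2 this)]
        · have : ¬ ((0:ℝ) ≤ t - s ∧ t - s ≤ x - s) := by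
            intro h; exact ht ⟨by linarith [h.1], by linarith [h.2]⟩
          simp only [Set.indicator_of_notMem (fun hmem => this (Set.mem_Icc.1 hmem))]
          have : ¬ (0 < s ∧ s ≤ t ∧ t ≤ x) := by tauto
          simp [this]
      refine le_of_eq ?_
      calc ∫⁻ t, e t s
          = (∫⁻ t, (Icc 0 (x - s)).indicator (fun u => (‖f u‖₊ : ENNReal)) (t - s))
              * (ENNReal.ofReal (π - s) * ‖g s‖₊) := by
            simp_rw [hrw]
            exact lintegral_mul_const _ ((Measurable.indicator hf.nnnorm.coe_nnreal_ennreal measurableSet_Icc).comp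
              (measurable_id.sub measurable_const))
        _ = (∫⁻ u, (Icc 0 (x - s)).indicator (fun u => (‖f u‖₊ : ENNReal)) u)
              * (ENNReal.ofReal (π - s) * ‖g s‖₊) := by
            congr 1
            have h : Measurable (fun u : ℝ => (Icc 0 (x - s)).indicator (fun u => (‖f u‖₊ : ENNReal)) u) :=
              Measurable.indicator hf.nnnorm.coe_nnreal_ennreal measurableSet_Icc
            have hm : Measurable (fun t : ℝ => t - s) := measurable_id.sub measurable_const
            have := lintegral_map (μ := volume) h hm
            rw [show (fun t : ℝ => t - s) = (fun t : ℝ => t + (-s)) by ext t; ring,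
              map_add_right_eq_self volume (-s)] at this
            exact this.symm
        _ = (∫⁻ u in Icc 0 (x - s), (‖f u‖₊ : ENNReal)) * (ENNReal.ofReal (π - s) * ‖g s‖₊) := by
            rw [lintegral_indicator measurableSet_Icc]
        _ = (∫⁻ u in Ioc 0 (x - s), (‖f u‖₊ : ENNReal)) * (ENNReal.ofReal (π - s) * ‖g s‖₊) := by
            rw [setLIntegral_congr Ioc_ae_eq_Icc]
        _ = kk f (x - s) * gg g s := by
            rw [kk, gg, Set.indicator_of_mem (Set.mem_Icc.2 ⟨by linarith [hs.2], by linarith [hs.1]⟩),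
              Set.indicator_of_mem (Set.mem_Ioo.2 ⟨hs.1, by linarith [hs.2]⟩)]
    · have : ∀ t, e t s = 0 := by
        intro t; rw [he]
        have : ¬ (0 < s ∧ s ≤ t ∧ t ≤ x) := by
          intro h; exact hs ⟨h.1, h.2.1.trans h.2.2⟩
        simp [this]
      simp only [this, lintegral_zero]
      exact zero_le
  calc ENNReal.ofReal (π - x) * ∫⁻ t in Ioc 0 x, ∫⁻ s in Ioc 0 t, (‖f (t - s)‖₊ : ENNReal) * ‖g s‖₊
      ≤ ∫⁻ t, ∫⁻ s, e t s := stepA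
    _ = ∫⁻ s, ∫⁻ t, e t s := stepB
    _ ≤ ∫⁻ s, kk f (x - s) * gg g s := lintegral_mono stepC

noncomputable def Qn (f : ℝ → ℂ) : ENNReal :=
  (∫⁻ u in Ioo 0 π, (ENNReal.ofReal (π - u) * ‖f u‖₊) ^ (2:ℝ)) ^ ((2:ℝ)⁻¹)

lemma kmass {f : ℝ → ℂ} (hf : Measurable f) :
    ∫⁻ y, kk f y ≤ ENNReal.ofReal (Real.sqrt π) * Qn f := by
  set E : ℝ → ℝ → ENNReal := fun y u =>
    if (0 < u ∧ u ≤ π) ∧ (u ≤ y ∧ y ≤ π) then (‖f u‖₊ : ENNReal) else 0 with hE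
  have hEmeas : Measurable (Function.uncurry E) := by
    have hset : MeasurableSet {p : ℝ × ℝ | (0 < p.2 ∧ p.2 ≤ π) ∧ (p.2 ≤ p.1 ∧ p.1 ≤ π)} := by
      refine MeasurableSet.inter ?_ ?_
      · exact MeasurableSet.inter (measurableSet_lt measurable_const measurable_snd)
          (measurableSet_le measurable_snd measurable_const)
      · exact MeasurableSet.inter (measurableSet_le measurable_snd measurable_fst)
          (measurableSet_le measurable_fst measurable_const)
    have : Function.uncurry E = fun p : ℝ × ℝ =>
        if p ∈ {p : ℝ × ℝ | (0 < p.2 ∧ p.2 ≤ π) ∧ (p.2 ≤ p.1 ∧ p.1 ≤ π)} then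
          (‖f p.2‖₊ : ENNReal) else 0 := by funext p; rfl
    rw [this]
    exact Measurable.ite hset (hf.comp measurable_snd).nnnorm.coe_nnreal_ennreal measurable_const
  have step1 : ∫⁻ y, kk f y = ∫⁻ y, ∫⁻ u, E y u := by
    refine lintegral_congr fun y => ?_
    rw [kk]
    by_cases hy : y ∈ Icc (0:ℝ) π
    · rw [Set.indicator_of_mem hy, ← lintegral_indicator measurableSet_Ioc]
      refine lintegral_congr fun u => ?_
      obtain ⟨hy0, hyπ⟩ := Set.mem_Icc.1 hy
      rw [Set.indicator_apply, hE]
      beta_reduce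
      by_cases hu : u ∈ Ioc 0 y
      · obtain ⟨hu0, huy⟩ := Set.mem_Ioc.1 hu
        rw [if_pos hu, if_pos ⟨⟨hu0, huy.trans hyπ⟩, ⟨huy, hyπ⟩⟩]
      · rw [if_neg hu, if_neg fun h => hu (Set.mem_Ioc.2 ⟨h.1.1, h.2.1⟩)]
    · rw [Set.indicator_of_notMem hy]
      symm
      have : ∀ u, E y u = 0 := by
        intro u
        rw [hE]
        beta_reduce
        refine if_neg fun h => hy (Set.mem_Icc.2 ⟨le_trans h.1.1.le h.2.1, h.2.2⟩)
      simp [this]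
  have step2 : ∫⁻ y, ∫⁻ u, E y u = ∫⁻ u, ∫⁻ y, E y u :=
    lintegral_lintegral_swap hEmeas.aemeasurable
  have step3 : ∫⁻ u, ∫⁻ y, E y u = ∫⁻ u in Ioo 0 π, ENNReal.ofReal (π - u) * ‖f u‖₊ := by
    have h1 : ∫⁻ u, ∫⁻ y, E y u
        = ∫⁻ u, (Ioc 0 π).indicator (fun u => ENNReal.ofReal (π - u) * ‖f u‖₊) u := by
      refine lintegral_congr fun u => ?_
      by_cases hu : u ∈ Ioc (0:ℝ) π
      · obtain ⟨hu0, huπ⟩ := Set.mem_Ioc.1 hu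
        have : ∀ y, E y u = (Icc u π).indicator (fun _ => (‖f u‖₊ : ENNReal)) y := by
          intro y
          rw [hE, Set.indicator_apply]
          beta_reduce
          by_cases hy : y ∈ Icc u π
          · rw [if_pos ⟨⟨hu0, huπ⟩, Set.mem_Icc.1 hy⟩, if_pos hy]
          · rw [if_neg fun h => hy (Set.mem_Icc.2 h.2), if_neg hy]
        simp_rw [this]
        rw [lintegral_indicator measurableSet_Icc, setLIntegral_const,
          Set.indicator_of_mem hu, Real.volume_Icc, mul_comm]
      · have : ∀ y, E y u = 0 := by
          intro y; rw [hE]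
          exact if_neg fun h => hu (Set.mem_Ioc.2 ⟨h.1.1, h.1.2⟩)
        simp [this, Set.indicator_of_notMem hu]
    rw [h1, lintegral_indicator measurableSet_Ioc, setLIntegral_congr (Ioo_ae_eq_Ioc (α := ℝ)).symm]
  have step4 : ∫⁻ u in Ioo 0 π, ENNReal.ofReal (π - u) * ‖f u‖₊
      ≤ ENNReal.ofReal (Real.sqrt π) * Qn f := by
    have hH := ENNReal.lintegral_mul_le_Lp_mul_Lq (volume.restrict (Ioo 0 π))
      (⟨by norm_num, by norm_num, by norm_num⟩ : Real.HolderConjugate 2 2)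
      (f := fun _ => (1:ENNReal))
      (g := fun u => ENNReal.ofReal (π - u) * ‖f u‖₊)
      aemeasurable_const
      (((ENNReal.measurable_ofReal.comp (measurable_const.sub measurable_id)).mul hf.nnnorm.coe_nnreal_ennreal).aemeasurable)
    simp only [Pi.mul_apply, one_mul] at hH
    calc ∫⁻ u in Ioo 0 π, ENNReal.ofReal (π - u) * ‖f u‖₊
        ≤ (∫⁻ _ in Ioo 0 π, (1:ENNReal) ^ (2:ℝ)) ^ ((1:ℝ)/2)
            * (∫⁻ u in Ioo 0 π, (ENNReal.ofReal (π - u) * ‖f u‖₊) ^ (2:ℝ)) ^ ((1:ℝ)/2) := hH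
      _ = ENNReal.ofReal (Real.sqrt π) * Qn f := by
          rw [Qn]
          congr 1
          · rw [ENNReal.one_rpow, lintegral_one, Measure.restrict_apply MeasurableSet.univ,
              Set.univ_inter, Real.volume_Ioo, sub_zero]
            rw [show (1:ℝ)/2 = (2:ℝ)⁻¹ by norm_num,
              ENNReal.ofReal_rpow_of_pos Real.pi_pos, Real.sqrt_eq_rpow]
            norm_num
          · norm_num
  calc ∫⁻ y, kk f y = ∫⁻ u, ∫⁻ y, E y u := by rw [step1, step2]
    _ = ∫⁻ u in Ioo 0 π, ENNReal.ofReal (π - u) * ‖f u‖₊ := step3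
    _ ≤ ENNReal.ofReal (Real.sqrt π) * Qn f := step4

noncomputable def conv1 (f g : ℝ → ℂ) : ℝ → ℂ :=
  fun t => ∫ s, (Ioc (0:ℝ) t).indicator (fun s => f (t - s) * g s) s

lemma conv1_uncurry_meas {f g : ℝ → ℂ} (hf : Measurable f) (hg : Measurable g) :
    Measurable (fun p : ℝ × ℝ => (Ioc (0:ℝ) p.1).indicator (fun s => f (p.1 - s) * g s) p.2) := by
  have hset : MeasurableSet {p : ℝ × ℝ | 0 < p.2 ∧ p.2 ≤ p.1} :=
    MeasurableSet.inter (measurableSet_lt measurable_const measurable_snd)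
      (measurableSet_le measurable_snd measurable_fst)
  have : (fun p : ℝ × ℝ => (Ioc (0:ℝ) p.1).indicator (fun s => f (p.1 - s) * g s) p.2)
      = fun p : ℝ × ℝ => if p ∈ {p : ℝ × ℝ | 0 < p.2 ∧ p.2 ≤ p.1}
          then f (p.1 - p.2) * g p.2 else 0 := by
    funext p
    rw [Set.indicator_apply]
    rfl
  rw [this]
  exact Measurable.ite hset
    ((hf.comp (measurable_fst.sub measurable_snd)).mul (hg.comp measurable_snd)) measurable_const

lemma conv1_sm {f g : ℝ → ℂ} (hf : Measurable f) (hg : Measurable g) :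
    StronglyMeasurable (conv1 f g) := by
  apply StronglyMeasurable.integral_prod_right
    (f := fun t s => (Ioc (0:ℝ) t).indicator (fun s => f (t - s) * g s) s)
  exact (conv1_uncurry_meas hf hg).stronglyMeasurable

lemma enorm_indicator_eq (F : ℝ → ℂ) (s : Set ℝ) (x : ℝ) :
    (‖s.indicator F x‖₊ : ENNReal) = s.indicator (fun x => (‖F x‖₊ : ENNReal)) x := by
  by_cases h : x ∈ s <;> simp [h]

lemma conv1_enorm_le {f g : ℝ → ℂ} (t : ℝ) :
    (‖conv1 f g t‖₊ : ENNReal) ≤ ∫⁻ s in Ioc 0 t, (‖f (t - s)‖₊ : ENNReal) * ‖g s‖₊ := by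
  calc (‖conv1 f g t‖₊ : ENNReal)
      ≤ ∫⁻ s, ‖(Ioc (0:ℝ) t).indicator (fun s => f (t - s) * g s) s‖₊ :=
        enorm_integral_le_lintegral_enorm _
    _ = ∫⁻ s in Ioc 0 t, (‖f (t - s) * g s‖₊ : ENNReal) := by
        simp_rw [enorm_indicator_eq]
        rw [lintegral_indicator measurableSet_Ioc]
    _ = ∫⁻ s in Ioc 0 t, (‖f (t - s)‖₊ : ENNReal) * ‖g s‖₊ := by
        simp_rw [nnnorm_mul, ENNReal.coe_mul]

lemma conv1_intOn {f g : ℝ → ℂ} (hf : Measurable f) (hg : Measurable g)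
    (hfin_f : ∫⁻ u, (‖f u‖₊ : ENNReal) ≠ ⊤) (hfin_g : ∫⁻ u, (‖g u‖₊ : ENNReal) ≠ ⊤) :
    IntegrableOn (conv1 f g) (Icc 0 π) := by
  refine ⟨(conv1_sm hf hg).aestronglyMeasurable, ?_⟩
  rw [HasFiniteIntegral]
  calc ∫⁻ t in Icc 0 π, (‖conv1 f g t‖₊ : ENNReal)
      = ∫⁻ t in Ioc 0 π, (‖conv1 f g t‖₊ : ENNReal) := (setLIntegral_congr Ioc_ae_eq_Icc).symm
    _ ≤ ∫⁻ t in Ioc 0 π, ∫⁻ s in Ioc 0 t, (‖f (t - s)‖₊ : ENNReal) * ‖g s‖₊ :=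
        lintegral_mono fun t => conv1_enorm_le t
    _ ≤ (∫⁻ u, (‖f u‖₊ : ENNReal)) * ∫⁻ u, (‖g u‖₊ : ENNReal) :=
        double_lt_top hf.nnnorm.coe_nnreal_ennreal hg.nnnorm.coe_nnreal_ennreal
    _ < ⊤ := ENNReal.mul_lt_top hfin_f.lt_top hfin_g.lt_top

lemma ofReal_sq_helper {a : ℝ} (ha : 0 ≤ a) (z : ℂ) :
    ENNReal.ofReal ((a * ‖z‖) ^ 2) = (ENNReal.ofReal a * ‖z‖₊) ^ (2:ℝ) := by
  rw [show (2:ℝ) = ((2:ℕ):ℝ) by norm_num, ENNReal.rpow_natCast,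
    ENNReal.ofReal_pow (mul_nonneg ha (norm_nonneg z)), ENNReal.ofReal_mul ha,
    ← coe_nnnorm, ENNReal.ofReal_coe_nnreal]

lemma gg_sq (f : ℝ → ℂ) :
    ∫⁻ s, gg f s ^ (2:ℝ) = ∫⁻ s in Ioo 0 π, (ENNReal.ofReal (π - s) * ‖f s‖₊) ^ (2:ℝ) := by
  rw [← lintegral_indicator measurableSet_Ioo]
  refine lintegral_congr fun s => ?_
  by_cases h : s ∈ Ioo (0:ℝ) π
  · rw [gg, Set.indicator_of_mem h, Set.indicator_of_mem h]
  · rw [gg, Set.indicator_of_notMem h, Set.indicator_of_notMem h,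
      ENNReal.zero_rpow_of_pos (by norm_num)]

theorem stmt_14 (r : ℝ) (hr : 0 < r) (N Nt M Mt : ℝ → ℂ)
    (hNint : MeasureTheory.IntegrableOn N (Set.Ioo 0 π))
    (hNtint : MeasureTheory.IntegrableOn Nt (Set.Ioo 0 π))
    (hN2 : MeasureTheory.Integrable
      (fun x => ((π - x) * ‖N x‖) ^ 2) (volume.restrict (Set.Ioo 0 π)))
    (hNt2 : MeasureTheory.Integrable
      (fun x => ((π - x) * ‖Nt x‖) ^ 2) (volume.restrict (Set.Ioo 0 π)))
    (hNr : Real.sqrt (∫ x in Set.Ioo 0 π, ((π - x) * ‖N x‖) ^ 2) ≤ r)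
    (hNtr : Real.sqrt (∫ x in Set.Ioo 0 π, ((π - x) * ‖Nt x‖) ^ 2) ≤ r)
    (hM : ∀ x ∈ Set.Ioo (0 : ℝ) π,
      M x = 2 * N x - ∫ t in (0 : ℝ)..x, ∫ s in (0 : ℝ)..t, N (t - s) * N s)
    (hMt : ∀ x ∈ Set.Ioo (0 : ℝ) π,
      Mt x = 2 * Nt x - ∫ t in (0 : ℝ)..x, ∫ s in (0 : ℝ)..t, Nt (t - s) * Nt s) :
    Real.sqrt (∫ x in Set.Ioo 0 π, ((π - x) * ‖M x - Mt x‖) ^ 2) ≤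
      (2 + 2 * r * Real.sqrt π) *
        Real.sqrt (∫ x in Set.Ioo 0 π, ((π - x) * ‖N x - Nt x‖) ^ 2) := by
  -- measurable representatives vanishing outside (0, π)
  set μ : Measure ℝ := volume.restrict (Ioo 0 π) with hμ
  have hNsm := hNint.1
  have hNtsm := hNtint.1
  set N₁ : ℝ → ℂ := (Ioo 0 π).indicator (hNsm.mk N) with hN₁def
  set Nt₁ : ℝ → ℂ := (Ioo 0 π).indicator (hNtsm.mk Nt) with hNt₁def
  have hN₁meas : Measurable N₁ := hNsm.stronglyMeasurable_mk.measurable.indicator measurableSet_Ioo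
  have hNt₁meas : Measurable Nt₁ := hNtsm.stronglyMeasurable_mk.measurable.indicator measurableSet_Ioo
  have hNae : N =ᵐ[μ] N₁ := by
    filter_upwards [hNsm.ae_eq_mk, ae_restrict_mem measurableSet_Ioo] with x h1 h2
    rw [hN₁def, Set.indicator_of_mem h2]; exact h1
  have hNtae : Nt =ᵐ[μ] Nt₁ := by
    filter_upwards [hNtsm.ae_eq_mk, ae_restrict_mem measurableSet_Ioo] with x h1 h2
    rw [hNt₁def, Set.indicator_of_mem h2]; exact h1
  have hNg : ∀ᵐ x ∂(volume : Measure ℝ), x ∈ Ioo 0 π → N x = N₁ x :=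
    ae_imp_of_ae_restrict hNae
  have hNtg : ∀ᵐ x ∂(volume : Measure ℝ), x ∈ Ioo 0 π → Nt x = Nt₁ x :=
    ae_imp_of_ae_restrict hNtae
  -- L¹ facts
  have hL1 : ∀ (f f₁ : ℝ → ℂ), IntegrableOn f (Ioo 0 π) → f =ᵐ[μ] f₁ →
      (∀ x, x ∉ Ioo 0 π → f₁ x = 0) → ∫⁻ u, (‖f₁ u‖₊ : ENNReal) ≠ ⊤ := by
    intro f f₁ hint hae hsupp
    have h1 : ∫⁻ u, (‖f₁ u‖₊ : ENNReal) = ∫⁻ u in Ioo 0 π, (‖f₁ u‖₊ : ENNReal) := by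
      rw [← lintegral_indicator measurableSet_Ioo]
      refine lintegral_congr fun u => ?_
      by_cases h : u ∈ Ioo (0:ℝ) π
      · rw [Set.indicator_of_mem h]
      · rw [Set.indicator_of_notMem h, hsupp u h]; simp
    have h2 : ∫⁻ u in Ioo 0 π, (‖f₁ u‖₊ : ENNReal) = ∫⁻ u in Ioo 0 π, (‖f u‖₊ : ENNReal) :=
      lintegral_congr_ae (by filter_upwards [hae] with u h; rw [h])
    rw [h1, h2]
    exact hint.2.ne
  have hN₁L1 : ∫⁻ u, (‖N₁ u‖₊ : ENNReal) ≠ ⊤ :=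
    hL1 N N₁ hNint hNae (fun x hx => by rw [hN₁def, Set.indicator_of_notMem hx])
  have hNt₁L1 : ∫⁻ u, (‖Nt₁ u‖₊ : ENNReal) ≠ ⊤ :=
    hL1 Nt Nt₁ hNtint hNtae (fun x hx => by rw [hNt₁def, Set.indicator_of_notMem hx])
  set D₁ : ℝ → ℂ := fun x => N₁ x - Nt₁ x with hD₁def
  have hD₁meas : Measurable D₁ := hN₁meas.sub hNt₁meas
  have hD₁L1 : ∫⁻ u, (‖D₁ u‖₊ : ENNReal) ≠ ⊤ := by
    have : ∀ u, (‖D₁ u‖₊ : ENNReal) ≤ (‖N₁ u‖₊ : ENNReal) + ‖Nt₁ u‖₊ := by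
      intro u
      rw [hD₁def]
      exact_mod_cast nnnorm_sub_le _ _
    refine ne_top_of_le_ne_top ?_ (lintegral_mono this)
    rw [lintegral_add_left hN₁meas.nnnorm.coe_nnreal_ennreal]
    exact ENNReal.add_ne_top.2 ⟨hN₁L1, hNt₁L1⟩
  -- Qn transfer
  have hQeq : ∀ (f f₁ : ℝ → ℂ), f =ᵐ[μ] f₁ →
      Integrable (fun x => ((π - x) * ‖f x‖) ^ 2) μ →
      ENNReal.ofReal (∫ x in Ioo 0 π, ((π - x) * ‖f x‖) ^ 2)
        = ∫⁻ u in Ioo 0 π, (ENNReal.ofReal (π - u) * ‖f₁ u‖₊) ^ (2:ℝ) := by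
    intro f f₁ hae hint
    rw [ofReal_integral_eq_lintegral_ofReal hint (ae_of_all _ fun x => sq_nonneg _)]
    refine lintegral_congr_ae ?_
    filter_upwards [hae, ae_restrict_mem measurableSet_Ioo] with x h1 h2
    rw [h1, ofReal_sq_helper (by linarith [h2.2])]
  have hsq_le : ∀ (I : ℝ), 0 ≤ I → Real.sqrt I ≤ r →
      (ENNReal.ofReal I) ^ ((2:ℝ)⁻¹) ≤ ENNReal.ofReal r := by
    intro I h0 hle
    have hIr : I ≤ r ^ 2 := by
      have := Real.sq_sqrt h0
      nlinarith [Real.sqrt_nonneg I]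
    calc (ENNReal.ofReal I) ^ ((2:ℝ)⁻¹) ≤ (ENNReal.ofReal (r ^ 2)) ^ ((2:ℝ)⁻¹) :=
        ENNReal.rpow_le_rpow (ENNReal.ofReal_le_ofReal hIr) (by norm_num)
      _ = ENNReal.ofReal r := by
        rw [show ENNReal.ofReal (r ^ 2) = (ENNReal.ofReal r) ^ (2:ℝ) by
          rw [show (2:ℝ) = ((2:ℕ):ℝ) by norm_num, ENNReal.rpow_natCast,
            ENNReal.ofReal_pow hr.le], sq_half]
  have hQN : Qn N₁ ≤ ENNReal.ofReal r := by
    rw [Qn, ← hQeq N N₁ hNae hN2]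
    exact hsq_le _ (integral_nonneg fun x => sq_nonneg _) hNr
  have hQNt : Qn Nt₁ ≤ ENNReal.ofReal r := by
    rw [Qn, ← hQeq Nt Nt₁ hNtae hNt2]
    exact hsq_le _ (integral_nonneg fun x => sq_nonneg _) hNtr
  -- integrability of the weighted square of the difference
  have hDae : (fun x => N x - Nt x) =ᵐ[μ] D₁ := by
    filter_upwards [hNae, hNtae] with x h1 h2
    rw [hD₁def, h1, h2]
  have hDsm : AEStronglyMeasurable (fun x => N x - Nt x) μ := hNsm.sub hNtsm
  have hconts : Continuous (fun x : ℝ => π - x) := continuous_const.sub continuous_id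
  have hwD : AEStronglyMeasurable (fun x => ((π - x) * ‖N x - Nt x‖) ^ 2) μ :=
    ((hconts.aestronglyMeasurable.mul hDsm.norm).pow 2)
  have hID2 : Integrable (fun x => ((π - x) * ‖N x - Nt x‖) ^ 2) μ := by
    refine Integrable.mono' ((hN2.const_mul 2).add (hNt2.const_mul 2)) hwD ?_
    filter_upwards [ae_restrict_mem measurableSet_Ioo] with x hx
    have ha : 0 ≤ π - x := by linarith [hx.2]
    have h1 : ‖N x - Nt x‖ ≤ ‖N x‖ + ‖Nt x‖ := norm_sub_le _ _
    rw [Real.norm_eq_abs, abs_of_nonneg (sq_nonneg _)]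
    have hb : (0:ℝ) ≤ ‖N x - Nt x‖ := norm_nonneg _
    have key : (π - x) * ‖N x - Nt x‖ ≤ (π - x) * (‖N x‖ + ‖Nt x‖) :=
      mul_le_mul_of_nonneg_left h1 ha
    show ((π - x) * ‖N x - Nt x‖) ^ 2
      ≤ 2 * ((π - x) * ‖N x‖) ^ 2 + 2 * ((π - x) * ‖Nt x‖) ^ 2
    nlinarith [key, mul_nonneg ha hb, sq_nonneg ((π - x) * ‖N x‖ - (π - x) * ‖Nt x‖),
      mul_nonneg ha (add_nonneg (norm_nonneg (N x)) (norm_nonneg (Nt x)))]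
  have hQD : Qn D₁
      = (ENNReal.ofReal (∫ x in Ioo 0 π, ((π - x) * ‖N x - Nt x‖) ^ 2)) ^ ((2:ℝ)⁻¹) := by
    rw [Qn, ← hQeq (fun x => N x - Nt x) D₁ hDae hID2]
  -- replacing N by N₁ inside the double integrals
  have hIN : ∀ (f f₁ : ℝ → ℂ), (∀ᵐ u ∂(volume : Measure ℝ), u ∈ Ioo 0 π → f u = f₁ u) →
      ∀ x ∈ Ioo (0:ℝ) π,
        (∫ t in (0:ℝ)..x, ∫ s in (0:ℝ)..t, f (t - s) * f s) = ∫ t in (0:ℝ)..x, conv1 f₁ f₁ t := by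
    intro f f₁ hg x hx
    refine intervalIntegral.integral_congr fun t ht => ?_
    rw [Set.uIcc_of_le hx.1.le] at ht
    obtain ⟨ht0, htx⟩ := ht
    have htπ : t < π := lt_of_le_of_lt htx hx.2
    rw [conv1, intervalIntegral.integral_of_le ht0,
      MeasureTheory.integral_indicator measurableSet_Ioc]
    refine setIntegral_congr_ae measurableSet_Ioc ?_
    have hmp : MeasurePreserving (fun s : ℝ => t - s) volume volume :=
      ⟨measurable_const.sub measurable_id, Measure.map_sub_left_eq_self volume t⟩
    have hsub : ∀ᵐ s ∂(volume : Measure ℝ), (t - s ∈ Ioo 0 π → f (t - s) = f₁ (t - s)) := by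
      rw [ae_iff]
      exact hmp.quasiMeasurePreserving.preimage_null (ae_iff.1 hg)
    have hne : ∀ᵐ s ∂(volume : Measure ℝ), s ≠ t := by
      rw [ae_iff]
      have : {s : ℝ | ¬ s ≠ t} = {t} := by ext u; simp [not_not]
      rw [this]
      exact Real.volume_singleton
    filter_upwards [hg, hsub, hne] with s h1 h2 h3 hmem
    obtain ⟨hs0, hst⟩ := hmem
    have hst' : s < t := lt_of_le_of_ne hst h3
    rw [h1 ⟨hs0, lt_of_le_of_lt hst htπ⟩, h2 ⟨by linarith, by linarith⟩]
  set c₁ : ℝ → ℂ := conv1 N₁ N₁ with hc₁def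
  set ct₁ : ℝ → ℂ := conv1 Nt₁ Nt₁ with hct₁def
  set F₁ : ℝ → ℂ := fun x =>
    2 * D₁ x - ((∫ t in (0:ℝ)..x, c₁ t) - ∫ t in (0:ℝ)..x, ct₁ t) with hF₁def
  have hMF : ∀ᵐ x ∂μ, M x - Mt x = F₁ x := by
    filter_upwards [ae_restrict_mem measurableSet_Ioo, hNae, hNtae] with x hx h1 h2
    rw [hM x hx, hMt x hx, hIN N N₁ hNg x hx, hIN Nt Nt₁ hNtg x hx, hF₁def]
    simp only [hD₁def]
    rw [h1, h2]
    ring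
  have hc₁int : IntegrableOn c₁ (Icc 0 π) := conv1_intOn hN₁meas hN₁meas hN₁L1 hN₁L1
  have hct₁int : IntegrableOn ct₁ (Icc 0 π) := conv1_intOn hNt₁meas hNt₁meas hNt₁L1 hNt₁L1
  -- a.e. integrability of the inner convolution integrand
  have haeint : ∀ (f : ℝ → ℂ), Measurable f → (∫⁻ u, (‖f u‖₊ : ENNReal)) ≠ ⊤ →
      ∀ᵐ t ∂volume.restrict (Ioc 0 π),
        Integrable (fun s => (Ioc (0:ℝ) t).indicator (fun s => f (t - s) * f s) s) := by
    intro f hf hfin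
    have hrw : ∀ t : ℝ, ∫⁻ s, (‖(Ioc (0:ℝ) t).indicator (fun s => f (t - s) * f s) s‖₊ : ENNReal)
        = ∫⁻ s in Ioc 0 t, (‖f (t - s)‖₊ : ENNReal) * ‖f s‖₊ := by
      intro t
      simp_rw [enorm_indicator_eq]
      rw [lintegral_indicator measurableSet_Ioc]
      simp_rw [nnnorm_mul, ENNReal.coe_mul]
    have hmeasint : Measurable fun t =>
        ∫⁻ s, (‖(Ioc (0:ℝ) t).indicator (fun s => f (t - s) * f s) s‖₊ : ENNReal) :=
      Measurable.lintegral_prod_right ((conv1_uncurry_meas hf hf).nnnorm.coe_nnreal_ennreal)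
    have hfin2 : (∫⁻ t in Ioc 0 π,
        ∫⁻ s, (‖(Ioc (0:ℝ) t).indicator (fun s => f (t - s) * f s) s‖₊ : ENNReal)) ≠ ⊤ := by
      simp_rw [hrw]
      exact (lt_of_le_of_lt (double_lt_top hf.nnnorm.coe_nnreal_ennreal hf.nnnorm.coe_nnreal_ennreal)
        (ENNReal.mul_lt_top hfin.lt_top hfin.lt_top)).ne
    filter_upwards [ae_lt_top hmeasint hfin2] with t ht
    exact ⟨(((hf.comp (measurable_const.sub measurable_id)).mul hf).indicator
      measurableSet_Ioc).aestronglyMeasurable, ht⟩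
  -- pointwise bound for the difference of the convolutions
  have hcdiff : ∀ᵐ t ∂volume.restrict (Ioc 0 π), (‖c₁ t - ct₁ t‖₊ : ENNReal)
      ≤ ∫⁻ s in Ioc 0 t,
          ((‖N₁ (t - s)‖₊ : ENNReal) * ‖D₁ s‖₊ + (‖D₁ (t - s)‖₊ : ENNReal) * ‖Nt₁ s‖₊) := by
    filter_upwards [haeint N₁ hN₁meas hN₁L1, haeint Nt₁ hNt₁meas hNt₁L1] with t h1 h2
    have hsub : c₁ t - ct₁ t = ∫ s, ((Ioc (0:ℝ) t).indicator (fun s => N₁ (t - s) * N₁ s) s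
        - (Ioc (0:ℝ) t).indicator (fun s => Nt₁ (t - s) * Nt₁ s) s) := (integral_sub h1 h2).symm
    rw [hsub]
    calc (‖∫ s, ((Ioc (0:ℝ) t).indicator (fun s => N₁ (t - s) * N₁ s) s
            - (Ioc (0:ℝ) t).indicator (fun s => Nt₁ (t - s) * Nt₁ s) s)‖₊ : ENNReal)
        ≤ ∫⁻ s, ‖(Ioc (0:ℝ) t).indicator (fun s => N₁ (t - s) * N₁ s) s
            - (Ioc (0:ℝ) t).indicator (fun s => Nt₁ (t - s) * Nt₁ s) s‖₊ :=
          enorm_integral_le_lintegral_enorm _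
      _ ≤ ∫⁻ s, (Ioc (0:ℝ) t).indicator
            (fun s => (‖N₁ (t - s)‖₊ : ENNReal) * ‖D₁ s‖₊ + (‖D₁ (t - s)‖₊ : ENNReal) * ‖Nt₁ s‖₊) s := by
          refine lintegral_mono fun s => ?_
          by_cases hmem : s ∈ Ioc (0:ℝ) t
          · rw [Set.indicator_of_mem hmem, Set.indicator_of_mem hmem, Set.indicator_of_mem hmem]
            have hid : N₁ (t - s) * N₁ s - Nt₁ (t - s) * Nt₁ s
                = N₁ (t - s) * D₁ s + D₁ (t - s) * Nt₁ s := by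
              simp only [hD₁def]; ring
            rw [hid]
            calc (‖N₁ (t - s) * D₁ s + D₁ (t - s) * Nt₁ s‖₊ : ENNReal)
                ≤ (‖N₁ (t - s) * D₁ s‖₊ : ENNReal) + ‖D₁ (t - s) * Nt₁ s‖₊ := by
                  exact_mod_cast nnnorm_add_le _ _
              _ = (‖N₁ (t - s)‖₊ : ENNReal) * ‖D₁ s‖₊ + (‖D₁ (t - s)‖₊ : ENNReal) * ‖Nt₁ s‖₊ := by
                  simp [nnnorm_mul]
          · rw [Set.indicator_of_notMem hmem, Set.indicator_of_notMem hmem,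
              Set.indicator_of_notMem hmem]
            simp
      _ = ∫⁻ s in Ioc 0 t,
            ((‖N₁ (t - s)‖₊ : ENNReal) * ‖D₁ s‖₊ + (‖D₁ (t - s)‖₊ : ENNReal) * ‖Nt₁ s‖₊) := by
          rw [lintegral_indicator measurableSet_Ioc]
  -- the central pointwise bound
  set q : ℝ → ENNReal := fun x => ENNReal.ofReal (π - x) * ‖D₁ x‖₊ with hqdef
  set Ψ₁ : ℝ → ENNReal := fun x => ∫⁻ s, kk N₁ (x - s) * gg D₁ s with hΨ₁def
  set Ψ₂ : ℝ → ENNReal := fun x => ∫⁻ s, kk D₁ (x - s) * gg Nt₁ s with hΨ₂def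
  have hqmeas : Measurable q :=
    (ENNReal.measurable_ofReal.comp (measurable_const.sub measurable_id)).mul hD₁meas.nnnorm.coe_nnreal_ennreal
  have hΨ₁meas : Measurable Ψ₁ := Measurable.lintegral_prod_right
    (((kk_meas N₁).comp (measurable_fst.sub measurable_snd)).mul
      ((gg_meas hD₁meas).comp measurable_snd))
  have hΨ₂meas : Measurable Ψ₂ := Measurable.lintegral_prod_right
    (((kk_meas D₁).comp (measurable_fst.sub measurable_snd)).mul
      ((gg_meas hNt₁meas).comp measurable_snd))
  have hP : ∀ x ∈ Ioo (0:ℝ) π, ENNReal.ofReal (π - x)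
      * (‖(∫ t in (0:ℝ)..x, c₁ t) - ∫ t in (0:ℝ)..x, ct₁ t‖₊ : ENNReal) ≤ Ψ₁ x + Ψ₂ x := by
    intro x hx
    have hix : IntervalIntegrable c₁ volume 0 x := by
      apply IntegrableOn.intervalIntegrable
      apply hc₁int.mono_set
      rw [Set.uIcc_of_le hx.1.le]
      exact Icc_subset_Icc le_rfl hx.2.le
    have hitx : IntervalIntegrable ct₁ volume 0 x := by
      apply IntegrableOn.intervalIntegrable
      apply hct₁int.mono_set
      rw [Set.uIcc_of_le hx.1.le]
      exact Icc_subset_Icc le_rfl hx.2.le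
    rw [← intervalIntegral.integral_sub hix hitx, intervalIntegral.integral_of_le hx.1.le]
    have hu1 : Measurable (Function.uncurry fun t s => (‖N₁ (t - s)‖₊ : ENNReal) * ‖D₁ s‖₊) :=
      ((hN₁meas.comp (measurable_fst.sub measurable_snd)).nnnorm.coe_nnreal_ennreal).mul
        (hD₁meas.comp measurable_snd).nnnorm.coe_nnreal_ennreal
    have hu2 : Measurable (Function.uncurry fun t s => (‖D₁ (t - s)‖₊ : ENNReal) * ‖Nt₁ s‖₊) :=
      ((hD₁meas.comp (measurable_fst.sub measurable_snd)).nnnorm.coe_nnreal_ennreal).mul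
        (hNt₁meas.comp measurable_snd).nnnorm.coe_nnreal_ennreal
    calc ENNReal.ofReal (π - x) * (‖∫ t in Ioc 0 x, (c₁ t - ct₁ t)‖₊ : ENNReal)
        ≤ ENNReal.ofReal (π - x) * ∫⁻ t in Ioc 0 x, (‖c₁ t - ct₁ t‖₊ : ENNReal) :=
          mul_le_mul_right (enorm_integral_le_lintegral_enorm _) _
      _ ≤ ENNReal.ofReal (π - x) * ∫⁻ t in Ioc 0 x, ∫⁻ s in Ioc 0 t,
            ((‖N₁ (t - s)‖₊ : ENNReal) * ‖D₁ s‖₊ + (‖D₁ (t - s)‖₊ : ENNReal) * ‖Nt₁ s‖₊) := by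
          refine mul_le_mul_right (lintegral_mono_ae ?_) _
          exact ae_restrict_of_ae_restrict_of_subset (Ioc_subset_Ioc le_rfl hx.2.le) hcdiff
      _ = ENNReal.ofReal (π - x) *
            ((∫⁻ t in Ioc 0 x, ∫⁻ s in Ioc 0 t, (‖N₁ (t - s)‖₊ : ENNReal) * ‖D₁ s‖₊)
            + ∫⁻ t in Ioc 0 x, ∫⁻ s in Ioc 0 t, (‖D₁ (t - s)‖₊ : ENNReal) * ‖Nt₁ s‖₊) := by
          congr 1
          calc ∫⁻ t in Ioc 0 x, ∫⁻ s in Ioc 0 t,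
                ((‖N₁ (t - s)‖₊ : ENNReal) * ‖D₁ s‖₊ + (‖D₁ (t - s)‖₊ : ENNReal) * ‖Nt₁ s‖₊)
              = ∫⁻ t in Ioc 0 x, ((∫⁻ s in Ioc 0 t, (‖N₁ (t - s)‖₊ : ENNReal) * ‖D₁ s‖₊)
                + ∫⁻ s in Ioc 0 t, (‖D₁ (t - s)‖₊ : ENNReal) * ‖Nt₁ s‖₊) := by
                refine lintegral_congr fun t => ?_
                exact lintegral_add_left
                  (((hN₁meas.comp (measurable_const.sub measurable_id)).nnnorm.coe_nnreal_ennreal).mul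
                    hD₁meas.nnnorm.coe_nnreal_ennreal) _
            _ = _ := lintegral_add_left (meas_inner hu1) _
      _ = ENNReal.ofReal (π - x) *
            (∫⁻ t in Ioc 0 x, ∫⁻ s in Ioc 0 t, (‖N₁ (t - s)‖₊ : ENNReal) * ‖D₁ s‖₊)
          + ENNReal.ofReal (π - x) *
            (∫⁻ t in Ioc 0 x, ∫⁻ s in Ioc 0 t, (‖D₁ (t - s)‖₊ : ENNReal) * ‖Nt₁ s‖₊) :=
          mul_add _ _ _
      _ ≤ Ψ₁ x + Ψ₂ x := add_le_add (geom hN₁meas hD₁meas hx) (geom hD₁meas hNt₁meas hx)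
  have hFbound : ∀ x ∈ Ioo (0:ℝ) π, (ENNReal.ofReal (π - x) * ‖F₁ x‖₊ : ENNReal)
      ≤ ((fun x => 2 * q x) + Ψ₁ + Ψ₂) x := by
    intro x hx
    have h1 : (‖F₁ x‖₊ : ENNReal)
        ≤ (‖2 * D₁ x‖₊ : ENNReal)
          + ‖(∫ t in (0:ℝ)..x, c₁ t) - ∫ t in (0:ℝ)..x, ct₁ t‖₊ := by
      rw [hF₁def]
      exact_mod_cast nnnorm_sub_le _ _
    calc (ENNReal.ofReal (π - x) * ‖F₁ x‖₊ : ENNReal)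
        ≤ ENNReal.ofReal (π - x) * ((‖2 * D₁ x‖₊ : ENNReal)
            + ‖(∫ t in (0:ℝ)..x, c₁ t) - ∫ t in (0:ℝ)..x, ct₁ t‖₊) := mul_le_mul_right h1 _
      _ = 2 * q x + ENNReal.ofReal (π - x)
            * (‖(∫ t in (0:ℝ)..x, c₁ t) - ∫ t in (0:ℝ)..x, ct₁ t‖₊ : ENNReal) := by
          rw [mul_add]
          congr 1
          rw [hqdef]
          have : (‖(2:ℂ) * D₁ x‖₊ : ENNReal) = 2 * ‖D₁ x‖₊ := by
            rw [nnnorm_mul]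
            push_cast
            congr 1
            simp
          rw [this]
          ring
      _ ≤ 2 * q x + (Ψ₁ x + Ψ₂ x) := add_le_add_right (hP x hx) _
      _ = ((fun x => 2 * q x) + Ψ₁ + Ψ₂) x := by
          simp only [Pi.add_apply]
          ring
  -- the main L² chain
  have hABC : (∫⁻ x in Ioo 0 π, (ENNReal.ofReal (π - x) * ‖F₁ x‖₊) ^ (2:ℝ)) ^ ((2:ℝ)⁻¹)
      ≤ ENNReal.ofReal (2 + 2 * r * Real.sqrt π) * Qn D₁ := by
    have hmono : ∫⁻ x in Ioo 0 π, (ENNReal.ofReal (π - x) * ‖F₁ x‖₊) ^ (2:ℝ)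
        ≤ ∫⁻ x in Ioo 0 π, (((fun x => 2 * q x) + Ψ₁ + Ψ₂) x) ^ (2:ℝ) :=
      setLIntegral_mono' measurableSet_Ioo fun x hx =>
        ENNReal.rpow_le_rpow (hFbound x hx) (by norm_num)
    have h2q : AEMeasurable (fun x => 2 * q x) (volume.restrict (Ioo 0 π)) :=
      (hqmeas.const_mul 2).aemeasurable
    have hmink1 := ENNReal.lintegral_Lp_add_le (μ := volume.restrict (Ioo 0 π))
      (f := (fun x => 2 * q x) + Ψ₁) (g := Ψ₂)
      (h2q.add hΨ₁meas.aemeasurable) hΨ₂meas.aemeasurable one_le_two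
    have hmink2 := ENNReal.lintegral_Lp_add_le (μ := volume.restrict (Ioo 0 π))
      (f := fun x => 2 * q x) (g := Ψ₁) h2q hΨ₁meas.aemeasurable one_le_two
    rw [show (1:ℝ)/2 = (2:ℝ)⁻¹ by norm_num] at hmink1 hmink2
    have t0 : (∫⁻ x in Ioo 0 π, ((2:ENNReal) * q x) ^ (2:ℝ)) ^ ((2:ℝ)⁻¹) = 2 * Qn D₁ := by
      have hx2 : ∀ x : ℝ, ((2:ENNReal) * q x) ^ (2:ℝ) = (2:ENNReal) ^ (2:ℝ) * q x ^ (2:ℝ) :=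
        fun x => ENNReal.mul_rpow_of_nonneg _ _ (by norm_num)
      simp_rw [hx2]
      rw [lintegral_const_mul ((2:ENNReal) ^ (2:ℝ)) (hqmeas.pow_const _),
        ENNReal.mul_rpow_of_nonneg _ _ (by norm_num), sq_half, Qn]
    have t1 : (∫⁻ x in Ioo 0 π, Ψ₁ x ^ (2:ℝ)) ^ ((2:ℝ)⁻¹)
        ≤ ENNReal.ofReal (Real.sqrt π * r) * Qn D₁ := by
      calc (∫⁻ x in Ioo 0 π, Ψ₁ x ^ (2:ℝ)) ^ ((2:ℝ)⁻¹)
          ≤ (∫⁻ x, Ψ₁ x ^ (2:ℝ)) ^ ((2:ℝ)⁻¹) :=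
            ENNReal.rpow_le_rpow (setLIntegral_le_lintegral _ _) (by norm_num)
        _ ≤ ((∫⁻ y, kk N₁ y) ^ (2:ℝ) * ∫⁻ s, gg D₁ s ^ (2:ℝ)) ^ ((2:ℝ)⁻¹) :=
            ENNReal.rpow_le_rpow (young (kk N₁) (gg D₁) (kk_meas N₁) (gg_meas hD₁meas))
              (by norm_num)
        _ = (∫⁻ y, kk N₁ y) * (∫⁻ s, gg D₁ s ^ (2:ℝ)) ^ ((2:ℝ)⁻¹) := by
            rw [ENNReal.mul_rpow_of_nonneg _ _ (by norm_num), sq_half]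
        _ = (∫⁻ y, kk N₁ y) * Qn D₁ := by rw [gg_sq, Qn]
        _ ≤ (ENNReal.ofReal (Real.sqrt π) * Qn N₁) * Qn D₁ :=
            mul_le_mul_left (kmass hN₁meas) _
        _ ≤ (ENNReal.ofReal (Real.sqrt π) * ENNReal.ofReal r) * Qn D₁ :=
            mul_le_mul_left (mul_le_mul_right hQN _) _
        _ = ENNReal.ofReal (Real.sqrt π * r) * Qn D₁ := by
            rw [ENNReal.ofReal_mul (Real.sqrt_nonneg π)]
    have t2 : (∫⁻ x in Ioo 0 π, Ψ₂ x ^ (2:ℝ)) ^ ((2:ℝ)⁻¹)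
        ≤ ENNReal.ofReal (Real.sqrt π * r) * Qn D₁ := by
      calc (∫⁻ x in Ioo 0 π, Ψ₂ x ^ (2:ℝ)) ^ ((2:ℝ)⁻¹)
          ≤ (∫⁻ x, Ψ₂ x ^ (2:ℝ)) ^ ((2:ℝ)⁻¹) :=
            ENNReal.rpow_le_rpow (setLIntegral_le_lintegral _ _) (by norm_num)
        _ ≤ ((∫⁻ y, kk D₁ y) ^ (2:ℝ) * ∫⁻ s, gg Nt₁ s ^ (2:ℝ)) ^ ((2:ℝ)⁻¹) :=
            ENNReal.rpow_le_rpow (young (kk D₁) (gg Nt₁) (kk_meas D₁) (gg_meas hNt₁meas))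
              (by norm_num)
        _ = (∫⁻ y, kk D₁ y) * (∫⁻ s, gg Nt₁ s ^ (2:ℝ)) ^ ((2:ℝ)⁻¹) := by
            rw [ENNReal.mul_rpow_of_nonneg _ _ (by norm_num), sq_half]
        _ = (∫⁻ y, kk D₁ y) * Qn Nt₁ := by rw [gg_sq, Qn]
        _ ≤ (ENNReal.ofReal (Real.sqrt π) * Qn D₁) * Qn Nt₁ :=
            mul_le_mul_left (kmass hD₁meas) _
        _ ≤ (ENNReal.ofReal (Real.sqrt π) * Qn D₁) * ENNReal.ofReal r :=
            mul_le_mul_right hQNt _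
        _ = ENNReal.ofReal (Real.sqrt π * r) * Qn D₁ := by
            rw [ENNReal.ofReal_mul (Real.sqrt_nonneg π)]
            ring
    calc (∫⁻ x in Ioo 0 π, (ENNReal.ofReal (π - x) * ‖F₁ x‖₊) ^ (2:ℝ)) ^ ((2:ℝ)⁻¹)
        ≤ (∫⁻ x in Ioo 0 π, (((fun x => 2 * q x) + Ψ₁ + Ψ₂) x) ^ (2:ℝ)) ^ ((2:ℝ)⁻¹) :=
          ENNReal.rpow_le_rpow hmono (by norm_num)
      _ ≤ (∫⁻ x in Ioo 0 π, (((fun x => 2 * q x) + Ψ₁) x) ^ (2:ℝ)) ^ ((2:ℝ)⁻¹)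
            + (∫⁻ x in Ioo 0 π, Ψ₂ x ^ (2:ℝ)) ^ ((2:ℝ)⁻¹) := hmink1
      _ ≤ ((∫⁻ x in Ioo 0 π, ((2:ENNReal) * q x) ^ (2:ℝ)) ^ ((2:ℝ)⁻¹)
            + (∫⁻ x in Ioo 0 π, Ψ₁ x ^ (2:ℝ)) ^ ((2:ℝ)⁻¹))
            + (∫⁻ x in Ioo 0 π, Ψ₂ x ^ (2:ℝ)) ^ ((2:ℝ)⁻¹) := add_le_add_left hmink2 _
      _ ≤ (2 * Qn D₁ + ENNReal.ofReal (Real.sqrt π * r) * Qn D₁)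
            + ENNReal.ofReal (Real.sqrt π * r) * Qn D₁ := by
          rw [t0]
          exact add_le_add (add_le_add_right t1 _) t2
      _ = (2 + ENNReal.ofReal (Real.sqrt π * r) + ENNReal.ofReal (Real.sqrt π * r)) * Qn D₁ := by
          ring
      _ = ENNReal.ofReal (2 + 2 * r * Real.sqrt π) * Qn D₁ := by
          congr 1
          rw [show (2:ENNReal) = ENNReal.ofReal 2 by simp,
            ← ENNReal.ofReal_add (by norm_num) (by positivity),
            ← ENNReal.ofReal_add (by positivity) (by positivity)]
          congr 1
          ring
  -- measurability of the primitive
  have hPrim : ∀ (c : ℝ → ℂ), IntegrableOn c (Icc 0 π) →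
      AEStronglyMeasurable (fun x => ∫ t in (0:ℝ)..x, c t) μ := by
    intro c hc
    have hcont : ContinuousOn (fun x => ∫ t in Ioc 0 x, c t) (Icc 0 π) :=
      intervalIntegral.continuousOn_primitive hc
    have h1 : AEStronglyMeasurable (fun x => ∫ t in Ioc 0 x, c t) μ :=
      (hcont.aestronglyMeasurable measurableSet_Icc).mono_measure
        (Measure.restrict_mono Ioo_subset_Icc_self le_rfl)
    refine h1.congr ?_
    filter_upwards [ae_restrict_mem measurableSet_Ioo] with x hx
    rw [intervalIntegral.integral_of_le hx.1.le]
  have hF₁sm : AEStronglyMeasurable F₁ μ := by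
    rw [hF₁def]
    exact ((hD₁meas.const_mul (2:ℂ)).aestronglyMeasurable).sub
      ((hPrim c₁ hc₁int).sub (hPrim ct₁ hct₁int))
  have hMMt_sm : AEStronglyMeasurable (fun x => M x - Mt x) μ := hF₁sm.congr (Filter.EventuallyEq.symm hMF)
  -- conversion of the goal to lintegrals
  have hLrw : ∫ x in Ioo 0 π, ((π - x) * ‖M x - Mt x‖) ^ 2
      = (∫⁻ x in Ioo 0 π, (ENNReal.ofReal (π - x) * ‖M x - Mt x‖₊) ^ (2:ℝ)).toReal := by
    have hsm2 : AEStronglyMeasurable (fun x => ((π - x) * ‖M x - Mt x‖) ^ 2) μ :=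
      (hconts.aestronglyMeasurable.mul hMMt_sm.norm).pow 2
    rw [integral_eq_lintegral_of_nonneg_ae (ae_of_all _ fun x => sq_nonneg _) hsm2]
    congr 1
    refine lintegral_congr_ae ?_
    filter_upwards [ae_restrict_mem measurableSet_Ioo] with x hx
    exact ofReal_sq_helper (by linarith [hx.2]) _
  have hTF : ∫⁻ x in Ioo 0 π, (ENNReal.ofReal (π - x) * ‖M x - Mt x‖₊) ^ (2:ℝ)
      = ∫⁻ x in Ioo 0 π, (ENNReal.ofReal (π - x) * ‖F₁ x‖₊) ^ (2:ℝ) := by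
    refine lintegral_congr_ae ?_
    filter_upwards [hMF] with x h
    rw [h]
  set C : ℝ := 2 + 2 * r * Real.sqrt π with hCdef
  have hC0 : 0 ≤ C := by positivity
  set ID : ℝ := ∫ x in Ioo 0 π, ((π - x) * ‖N x - Nt x‖) ^ 2 with hIDdef
  have hID0 : 0 ≤ ID := by
    rw [hIDdef]
    exact integral_nonneg fun x => sq_nonneg _
  set T : ENNReal := ∫⁻ x in Ioo 0 π, (ENNReal.ofReal (π - x) * ‖M x - Mt x‖₊) ^ (2:ℝ) with hTdef
  have hTbound : T ≤ ENNReal.ofReal (C ^ 2 * ID) := by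
    have h2 : T ^ ((2:ℝ)⁻¹) ≤ ENNReal.ofReal C * (ENNReal.ofReal ID) ^ ((2:ℝ)⁻¹) := by
      rw [hTF]
      calc (∫⁻ x in Ioo 0 π, (ENNReal.ofReal (π - x) * ‖F₁ x‖₊) ^ (2:ℝ)) ^ ((2:ℝ)⁻¹)
          ≤ ENNReal.ofReal C * Qn D₁ := hABC
        _ = ENNReal.ofReal C * (ENNReal.ofReal ID) ^ ((2:ℝ)⁻¹) := by rw [hQD]
    calc T = (T ^ ((2:ℝ)⁻¹)) ^ (2:ℝ) := (half_sq T).symm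
      _ ≤ (ENNReal.ofReal C * (ENNReal.ofReal ID) ^ ((2:ℝ)⁻¹)) ^ (2:ℝ) :=
          ENNReal.rpow_le_rpow h2 (by norm_num)
      _ = ENNReal.ofReal C ^ (2:ℝ) * ENNReal.ofReal ID := by
          rw [ENNReal.mul_rpow_of_nonneg _ _ (by norm_num), half_sq]
      _ = ENNReal.ofReal (C ^ 2 * ID) := by
          rw [show (2:ℝ) = ((2:ℕ):ℝ) by norm_num, ENNReal.rpow_natCast,
            ← ENNReal.ofReal_pow hC0, ← ENNReal.ofReal_mul (by positivity)]
  have h4 : T.toReal ≤ C ^ 2 * ID := ENNReal.toReal_le_of_le_ofReal (by positivity) hTbound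
  rw [hLrw]
  calc Real.sqrt T.toReal ≤ Real.sqrt (C ^ 2 * ID) := Real.sqrt_le_sqrt h4
    _ = C * Real.sqrt ID := by
        rw [Real.sqrt_mul (sq_nonneg C), Real.sqrt_sq hC0]
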